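/- arXiv:2412.05942 — 2 statements merged into one kernel-verified Lean document; each statement's English description precedes it below -/
import Mathlib

section
/- Let n ≥ 1 and let θ be an n×n matrix with nonnegative real entries such that ∏_{i} θ(i,σ(i)) > 0 for at least one permutation σ ∈ S_n, and let p_θ(σ) = (∏_i θ(i,σ(i)))/perm(θ). Then perm(θ)/perm_{B,2}(θ) = ( Σ_{σ_1,σ_2 ∈ S_n} p_θ(σ_1)·p_θ(σ_2)·2^{−c(σ_1,σ_2)} )^{−1/2}, where c(σ_1,σ_2) denotes the number of cycles of length at least 2 in the cycle decomposition of the permutation σ_1∘σ_2^{−1}, and perm_{B,2}(θ) = ⟨perm(θ↑P_2)⟩^{1/2}. -/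
open scoped BigOperators

noncomputable section

/-- The permanent of a real square matrix: `perm(A) = Σ_{σ} ∏_i A(i, σ(i))`. -/
def perm' {α : Type*} [Fintype α] [DecidableEq α] (A : Matrix α α ℝ) : ℝ :=
  ∑ σ : Equiv.Perm α, ∏ i, A i (σ i)

/-- The `P_M`-lifting `θ↑P_M`: the `nM×nM` matrix with entries
`(θ↑P_M)((i,m),(j,m')) = θ(i,j)·P^{(i,j)}(m,m')`. -/
def liftMat {n M : ℕ} (θ : Matrix (Fin n) (Fin n) ℝ)
    (P : Fin n → Fin n → Equiv.Perm (Fin M)) :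
    Matrix (Fin n × Fin M) (Fin n × Fin M) ℝ :=
  Matrix.of fun p q => θ p.1 q.1 * (if P p.1 q.1 p.2 = q.2 then 1 else 0)

/-- `⟨perm(θ↑P_M)⟩`: the arithmetic average of `perm(θ↑P_M)` over all `(M!)^{n²}`
collections `P_M` of `n²` permutation matrices of size `M×M`. -/
def avgLiftPerm (n M : ℕ) (θ : Matrix (Fin n) (Fin n) ℝ) : ℝ :=
  (∑ P : Fin n → Fin n → Equiv.Perm (Fin M), perm' (liftMat θ P)) /
    (Fintype.card (Fin n → Fin n → Equiv.Perm (Fin M)) : ℝ)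


open Equiv Equiv.Perm Finset

set_option maxHeartbeats 4000000

theorem Equiv.Perm.apply_inv_self {α : Type*} (f : Perm α) (x : α) : f (f⁻¹ x) = x :=
  Equiv.apply_symm_apply f x

theorem Equiv.Perm.inv_apply_self {α : Type*} (f : Perm α) (x : α) : f⁻¹ (f x) = x :=
  Equiv.symm_apply_apply f x

section Key2Sec

section Key2
variable {X : Type*} [Fintype X] [DecidableEq X]

omit [Fintype X] [DecidableEq X] in
lemma nofix_key (a b : Perm X) (ha : a * a = 1) (hb : b * b = 1)
    (ha' : ∀ x, a x ≠ x) (hb' : ∀ x, b x ≠ x) (k : ℤ) (x : X) :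
    ((a * b) ^ k) x ≠ a x := by
  set w := a * b with hwdef
  have hainv : a⁻¹ = a := inv_eq_of_mul_eq_one_right ha
  have hbinv : b⁻¹ = b := inv_eq_of_mul_eq_one_right hb
  have hw : a * w * a = w⁻¹ := by
    rw [hwdef, mul_inv_rev, hainv, hbinv]
    calc a * (a * b) * a = (a * a) * b * a := by rw [mul_assoc a a b]
      _ = b * a := by rw [ha, one_mul]
  have hconj : ∀ t : ℤ, a * w ^ t * a = w ^ (-t) := by
    intro t
    have h0 : (MulAut.conj a) (w ^ t) = ((MulAut.conj a) w) ^ t := map_zpow _ _ _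
    simp only [MulAut.conj_apply, hainv] at h0
    rw [hw] at h0
    rw [h0, inv_zpow, zpow_neg]
  have hshift : ∀ t : ℤ, a * w ^ t = w ^ (-t) * a := by
    intro t
    calc a * w ^ t = a * w ^ t * a * a := by rw [mul_assoc _ a a, ha, mul_one]
      _ = w ^ (-t) * a := by rw [hconj]
  have hcancel : ∀ (t : ℤ) (y : X), (w ^ t) ((w ^ (-t)) y) = y := by
    intro t y
    rw [← Equiv.Perm.mul_apply, ← zpow_add]
    simp
  have haw : a * w = b := by rw [hwdef, ← mul_assoc, ha, one_mul]
  intro hk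
  have hfix : (a * w ^ k) x = x := by
    rw [Equiv.Perm.mul_apply, hk, ← Equiv.Perm.mul_apply, ha, Equiv.Perm.one_apply]
  rcases Int.even_or_odd k with ⟨t, ht⟩ | ⟨t, ht⟩
  · have h2 : a * w ^ k = w ^ (-t) * a * w ^ t := by
      rw [ht, show t + t = t + t from rfl, zpow_add, ← mul_assoc, hshift t]
    rw [h2] at hfix
    have e1 : (w ^ (-t) : Perm X) ((a ((w ^ t) x))) = x := hfix
    have e2 := congrArg (⇑(w ^ t : Perm X)) e1
    rw [hcancel t] at e2
    exact ha' _ e2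
  · have h2 : a * w ^ k = w ^ (-t) * b * w ^ t := by
      rw [ht, show 2 * t + 1 = t + 1 + t by ring, zpow_add, zpow_add, zpow_one,
        ← mul_assoc, ← mul_assoc, hshift t, mul_assoc (w ^ (-t)) a w, haw]
    rw [h2] at hfix
    have e1 : (w ^ (-t) : Perm X) ((b ((w ^ t) x))) = x := hfix
    have e2 := congrArg (⇑(w ^ t : Perm X)) e1
    rw [hcancel t] at e2
    exact hb' _ e2

lemma key2 (a b : Perm X) (ha : a * a = 1) (hb : b * b = 1)
    (ha' : ∀ x, a x ≠ x) (hb' : ∀ x, b x ≠ x) :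
    ∃ χ : X → Bool, (∀ x, χ (a x) = !χ x) ∧ (∀ x, χ (b x) = !χ x) := by
  classical
  set w := a * b with hwdef
  have hainv : ∀ x, a (a x) = x := by
    intro x; rw [← Equiv.Perm.mul_apply, ha, Equiv.Perm.one_apply]
  have hcomm : ∀ u v : X, w.SameCycle u v → w.SameCycle (a u) (a v) := by
    rintro u v ⟨k, hk⟩
    refine ⟨-k, ?_⟩
    have h2 : a * w ^ k * a = w ^ (-k) := by
      have : (MulAut.conj a) (w ^ k) = ((MulAut.conj a) w) ^ k := map_zpow _ _ _
      have hai : a⁻¹ = a := inv_eq_of_mul_eq_one_right ha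
      have hbi : b⁻¹ = b := inv_eq_of_mul_eq_one_right hb
      have hw : a * w * a = w⁻¹ := by
        rw [hwdef, mul_inv_rev, hai, hbi]
        calc a * (a * b) * a = (a * a) * b * a := by rw [mul_assoc a a b]
          _ = b * a := by rw [ha, one_mul]
      simp only [MulAut.conj_apply, hai] at this
      rw [hw] at this
      rw [this, inv_zpow, zpow_neg]
    have := congrArg (fun f : Perm X => f (a u)) h2.symm
    simp only [Equiv.Perm.mul_apply] at this ⊢
    rw [this, hainv, hk]
  -- the setoid
  let r : X → X → Prop := fun x y => w.SameCycle x y ∨ w.SameCycle (a x) y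
  have hrefl : ∀ x, r x x := fun x => Or.inl (Equiv.Perm.SameCycle.refl _ _)
  have hsymm : ∀ {x y}, r x y → r y x := by
    rintro x y (h | h)
    · exact Or.inl h.symm
    · right
      have := hcomm _ _ h.symm
      rwa [hainv] at this
  have htrans : ∀ {x y z}, r x y → r y z → r x z := by
    rintro x y z (h1 | h1) (h2 | h2)
    · exact Or.inl (h1.trans h2)
    · right
      exact (hcomm _ _ h1).trans h2
    · exact Or.inr (h1.trans h2)
    · -- SameCycle (a x) y and SameCycle (a y) z
      left
      have h3 := hcomm _ _ h1
      rw [hainv] at h3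
      exact h3.trans h2
  letI s : Setoid X := ⟨r, hrefl, @hsymm, @htrans⟩
  let μ : X → X := fun x => (⟦x⟧ : Quotient s).out
  have hclass : ∀ x y, r x y → μ x = μ y := by
    intro x y h
    show (⟦x⟧ : Quotient s).out = (⟦y⟧ : Quotient s).out
    rw [Quotient.sound h]
  have hμ : ∀ x, r (μ x) x := fun x => Quotient.mk_out x
  have hnotboth : ∀ x, ¬(w.SameCycle (μ x) x ∧ w.SameCycle (μ x) (a x)) := by
    rintro x ⟨h1, h2⟩
    obtain ⟨k, hk⟩ := h1.symm.trans h2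
    exact nofix_key a b ha hb ha' hb' k x hk
  have hone : ∀ x, w.SameCycle (μ x) x ∨ w.SameCycle (μ x) (a x) := by
    intro x
    rcases hμ x with h | h
    · exact Or.inl h
    · right
      have h2 := hcomm _ _ h
      rwa [hainv] at h2
  let χ : X → Bool := fun x => decide (w.SameCycle (μ x) x)
  have hχa : ∀ x, χ (a x) = !χ x := by
    intro x
    have hca : μ (a x) = μ x :=
      (hclass x (a x) (Or.inr (Equiv.Perm.SameCycle.refl _ _))).symm
    by_cases h : w.SameCycle (μ x) x
    · have h2 : ¬ w.SameCycle (μ x) (a x) := fun hc => hnotboth x ⟨h, hc⟩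
      simp [χ, hca, h, h2]
    · have h2 : w.SameCycle (μ x) (a x) := (hone x).resolve_left h
      simp [χ, hca, h, h2]
  have hχw : ∀ x, χ (w x) = χ x := by
    intro x
    have hxw : w.SameCycle x (w x) := ⟨1, by simp⟩
    have hcw : μ (w x) = μ x := (hclass x (w x) (Or.inl hxw)).symm
    have hiff : w.SameCycle (μ x) (w x) ↔ w.SameCycle (μ x) x :=
      ⟨fun h => h.trans hxw.symm, fun h => h.trans hxw⟩
    simp [χ, hcw, hiff]
  have hbw : ∀ x, b x = a (w x) := by
    intro x
    have : w x = a (b x) := rfl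
    rw [this, hainv]
  refine ⟨χ, hχa, fun x => ?_⟩
  rw [hbw x, hχa (w x), hχw x]
end Key2


section MainSec
variable {n : ℕ}


def qq (τ : Perm (Fin n × Fin 2)) : Fin n → Sym2 (Fin n) :=
  fun i => s((τ (i, 0)).1, (τ (i, 1)).1)
def wθ (θ : Matrix (Fin n) (Fin n) ℝ) (i : Fin n) : Sym2 (Fin n) → ℝ :=
  Sym2.lift ⟨fun a b => θ i a * θ i b, fun _ _ => mul_comm _ _⟩
def eFac (n : ℕ) : Sym2 (Fin n) → ℝ :=
  Sym2.lift ⟨fun a b => (2:ℝ) ^ (n - ({a, b} : Finset (Fin n)).card),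
    fun a b => by
      show (2:ℝ) ^ (n - ({a, b} : Finset (Fin n)).card)
          = (2:ℝ) ^ (n - ({b, a} : Finset (Fin n)).card)
      rw [Finset.pair_comm]⟩

lemma perm2_univ : (Finset.univ : Finset (Perm (Fin 2))) = {1, Equiv.swap 0 1} := by
  decide
lemma swap01_apply0 : (Equiv.swap (0:Fin 2) 1) 0 = 1 := by decide
lemma swap01_apply1 : (Equiv.swap (0:Fin 2) 1) 1 = 0 := by decide
lemma sum_perm2_single0 (c : Fin 2) :
    ∑ p : Perm (Fin 2), (if p 0 = c then (1:ℝ) else 0) = 1 := by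
  rw [perm2_univ, Finset.sum_insert (by decide), Finset.sum_singleton]
  fin_cases c <;> simp [swap01_apply0]
lemma sum_perm2_single1 (c : Fin 2) :
    ∑ p : Perm (Fin 2), (if p 1 = c then (1:ℝ) else 0) = 1 := by
  rw [perm2_univ, Finset.sum_insert (by decide), Finset.sum_singleton]
  fin_cases c <;> simp [swap01_apply1]
lemma sum_perm2_double (c0 c1 : Fin 2) (h : c0 ≠ c1) :
    ∑ p : Perm (Fin 2),
      ((if p 0 = c0 then (1:ℝ) else 0) * (if p 1 = c1 then (1:ℝ) else 0)) = 1 := by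
  rw [perm2_univ, Finset.sum_insert (by decide), Finset.sum_singleton]
  fin_cases c0 <;> fin_cases c1 <;> simp_all [swap01_apply0, swap01_apply1]

lemma Ffact (τ : Perm (Fin n × Fin 2)) (i j : Fin n) :
    (∑ p : Perm (Fin 2),
        ∏ x ∈ Finset.univ.filter (fun x : Fin n × Fin 2 => (x.1, (τ x).1) = (i, j)),
          (if p x.2 = (τ x).2 then (1:ℝ) else 0))
      = if j ∈ ({(τ (i,0)).1, (τ (i,1)).1} : Finset (Fin n)) then 1 else 2 := by
  by_cases h0 : (τ (i, 0)).1 = j <;> by_cases h1 : (τ (i, 1)).1 = j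
  · have hfil : Finset.univ.filter (fun x : Fin n × Fin 2 => (x.1, (τ x).1) = (i, j))
        = {(i, 0), (i, 1)} := by
      ext ⟨xi, xm⟩
      simp only [Finset.mem_filter, Finset.mem_univ, true_and, Prod.mk.injEq,
        Finset.mem_insert, Finset.mem_singleton]
      constructor
      · rintro ⟨rfl, -⟩
        fin_cases xm
        · exact Or.inl ⟨rfl, rfl⟩
        · exact Or.inr ⟨rfl, rfl⟩
      · rintro (⟨rfl, rfl⟩ | ⟨rfl, rfl⟩)
        · exact ⟨rfl, h0⟩
        · exact ⟨rfl, h1⟩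
    rw [hfil]
    have hne2 : (τ (i, 0)).2 ≠ (τ (i, 1)).2 := by
      intro hc
      have : τ (i, 0) = τ (i, 1) := Prod.ext (h0.trans h1.symm) hc
      have := τ.injective this
      simp at this
    have hins : ((i, (0:Fin 2))) ∉ ({(i, 1)} : Finset (Fin n × Fin 2)) := by simp
    simp only [Finset.prod_insert hins, Finset.prod_singleton]
    rw [sum_perm2_double _ _ hne2]
    rw [if_pos (Finset.mem_insert.mpr (Or.inl h0.symm))]
  · have hfil : Finset.univ.filter (fun x : Fin n × Fin 2 => (x.1, (τ x).1) = (i, j))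
        = {(i, 0)} := by
      ext ⟨xi, xm⟩
      simp only [Finset.mem_filter, Finset.mem_univ, true_and, Prod.mk.injEq,
        Finset.mem_singleton]
      constructor
      · rintro ⟨rfl, hxj⟩
        fin_cases xm
        · exact ⟨rfl, rfl⟩
        · exact absurd hxj h1
      · rintro ⟨rfl, rfl⟩
        exact ⟨rfl, h0⟩
    rw [hfil]
    simp only [Finset.prod_singleton]
    rw [sum_perm2_single0]
    rw [if_pos (Finset.mem_insert.mpr (Or.inl h0.symm))]
  · have hfil : Finset.univ.filter (fun x : Fin n × Fin 2 => (x.1, (τ x).1) = (i, j))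
        = {(i, 1)} := by
      ext ⟨xi, xm⟩
      simp only [Finset.mem_filter, Finset.mem_univ, true_and, Prod.mk.injEq,
        Finset.mem_singleton]
      constructor
      · rintro ⟨rfl, hxj⟩
        fin_cases xm
        · exact absurd hxj h0
        · exact ⟨rfl, rfl⟩
      · rintro ⟨rfl, rfl⟩
        exact ⟨rfl, h1⟩
    rw [hfil]
    simp only [Finset.prod_singleton]
    rw [sum_perm2_single1]
    rw [if_pos (Finset.mem_insert.mpr (Or.inr (Finset.mem_singleton.mpr h1.symm)))]
  · have hfil : Finset.univ.filter (fun x : Fin n × Fin 2 => (x.1, (τ x).1) = (i, j))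
        = (∅ : Finset (Fin n × Fin 2)) := by
      ext ⟨xi, xm⟩
      simp only [Finset.mem_filter, Finset.mem_univ, true_and, Prod.mk.injEq,
        Finset.notMem_empty, iff_false, not_and]
      rintro rfl hxj
      fin_cases xm
      · exact h0 hxj
      · exact h1 hxj
    rw [hfil]
    simp only [Finset.prod_empty]
    rw [Finset.sum_const, Finset.card_univ, Fintype.card_perm, Fintype.card_fin]
    rw [if_neg (by
      simp only [Finset.mem_insert, Finset.mem_singleton]
      rintro (rfl | rfl)
      · exact h0 rfl
      · exact h1 rfl)]
    norm_num [Nat.factorial]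

lemma prod_ite_pair (j0 j1 : Fin n) :
    ∏ j : Fin n, (if j ∈ ({j0, j1} : Finset (Fin n)) then (1:ℝ) else 2)
      = (2:ℝ) ^ (n - ({j0, j1} : Finset (Fin n)).card) := by
  rw [Finset.prod_ite, Finset.prod_const, Finset.prod_const, one_pow, one_mul]
  congr 1
  have : Finset.univ.filter (fun j => ¬ j ∈ ({j0, j1} : Finset (Fin n)))
      = Finset.univ \ ({j0, j1} : Finset (Fin n)) := by
    ext x; simp
  rw [this, Finset.card_sdiff_of_subset (Finset.subset_univ _), Finset.card_univ, Fintype.card_fin]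

lemma W_split (θ : Matrix (Fin n) (Fin n) ℝ) (τ : Perm (Fin n × Fin 2)) :
    ∏ x : Fin n × Fin 2, θ x.1 (τ x).1 = ∏ i, wθ θ i (qq τ i) := by
  rw [Fintype.prod_prod_type]
  refine Finset.prod_congr rfl fun i _ => ?_
  rw [Fin.prod_univ_two]
  rfl

lemma J_split (τ : Perm (Fin n × Fin 2)) :
    ∑ P : Fin n → Fin n → Perm (Fin 2),
        ∏ x : Fin n × Fin 2, (if P x.1 (τ x).1 x.2 = (τ x).2 then (1:ℝ) else 0)
      = ∏ i, eFac n (qq τ i) := by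
  classical
  rw [← Equiv.sum_comp (Equiv.curry (Fin n) (Fin n) (Perm (Fin 2)))
    (fun P : Fin n → Fin n → Perm (Fin 2) =>
      ∏ x : Fin n × Fin 2, (if P x.1 (τ x).1 x.2 = (τ x).2 then (1:ℝ) else 0))]
  have h1 : ∀ Q : Fin n × Fin n → Perm (Fin 2),
      (∏ x : Fin n × Fin 2,
        (if (Equiv.curry (Fin n) (Fin n) (Perm (Fin 2)) Q) x.1 (τ x).1 x.2 = (τ x).2
          then (1:ℝ) else 0))
      = ∏ y : Fin n × Fin n,
          ∏ x ∈ Finset.univ.filter (fun x : Fin n × Fin 2 => (x.1, (τ x).1) = y),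
            (if Q y x.2 = (τ x).2 then (1:ℝ) else 0) := by
    intro Q
    simp only [Equiv.curry_apply, Function.curry_apply]
    rw [← Finset.prod_fiberwise Finset.univ (fun x : Fin n × Fin 2 => (x.1, (τ x).1))
      (fun x => if Q (x.1, (τ x).1) x.2 = (τ x).2 then (1:ℝ) else 0)]
    exact Finset.prod_congr rfl fun y _ => Finset.prod_congr rfl fun x hx => by
      rw [(Finset.mem_filter.mp hx).2]
  calc ∑ Q : Fin n × Fin n → Perm (Fin 2),
        (∏ x : Fin n × Fin 2,
          (if (Equiv.curry (Fin n) (Fin n) (Perm (Fin 2)) Q) x.1 (τ x).1 x.2 = (τ x).2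
            then (1:ℝ) else 0))
      = ∑ Q : Fin n × Fin n → Perm (Fin 2), ∏ y : Fin n × Fin n,
          ∏ x ∈ Finset.univ.filter (fun x : Fin n × Fin 2 => (x.1, (τ x).1) = y),
            (if Q y x.2 = (τ x).2 then (1:ℝ) else 0) :=
        Finset.sum_congr rfl fun Q _ => h1 Q
    _ = ∏ y : Fin n × Fin n, ∑ p : Perm (Fin 2),
          ∏ x ∈ Finset.univ.filter (fun x : Fin n × Fin 2 => (x.1, (τ x).1) = y),
            (if p x.2 = (τ x).2 then (1:ℝ) else 0) := by
        rw [Finset.prod_univ_sum]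
        rw [Fintype.piFinset_univ]
    _ = ∏ y : Fin n × Fin n,
          (if y.2 ∈ ({(τ (y.1,0)).1, (τ (y.1,1)).1} : Finset (Fin n)) then (1:ℝ) else 2) :=
        Finset.prod_congr rfl fun y _ => by
          have := Ffact τ y.1 y.2
          simpa using this
    _ = ∏ i, eFac n (qq τ i) := by
        rw [Fintype.prod_prod_type]
        refine Finset.prod_congr rfl fun i _ => ?_
        show (∏ j : Fin n, if j ∈ ({(τ (i,0)).1, (τ (i,1)).1} : Finset (Fin n))
            then (1:ℝ) else 2)
          = ((2:ℝ) ^ (n - ({(τ (i,0)).1, (τ (i,1)).1} : Finset (Fin n)).card))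
        exact prod_ite_pair _ _
  
lemma step1 (θ : Matrix (Fin n) (Fin n) ℝ) :
    ∑ P : Fin n → Fin n → Perm (Fin 2), perm' (liftMat θ P)
      = ∑ τ : Perm (Fin n × Fin 2), (∏ i, wθ θ i (qq τ i)) * (∏ i, eFac n (qq τ i)) := by
  unfold perm' liftMat
  rw [Finset.sum_comm]
  refine Finset.sum_congr rfl fun τ _ => ?_
  calc ∑ P : Fin n → Fin n → Perm (Fin 2), ∏ x : Fin n × Fin 2,
        (θ x.1 (τ x).1 * if P x.1 (τ x).1 x.2 = (τ x).2 then (1:ℝ) else 0)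
      = ∑ P : Fin n → Fin n → Perm (Fin 2), ((∏ x : Fin n × Fin 2, θ x.1 (τ x).1) *
          ∏ x : Fin n × Fin 2, (if P x.1 (τ x).1 x.2 = (τ x).2 then (1:ℝ) else 0)) :=
        Finset.sum_congr rfl fun P _ => Finset.prod_mul_distrib
    _ = (∏ x : Fin n × Fin 2, θ x.1 (τ x).1) *
          ∑ P : Fin n → Fin n → Perm (Fin 2),
            ∏ x : Fin n × Fin 2, (if P x.1 (τ x).1 x.2 = (τ x).2 then (1:ℝ) else 0) := by
        rw [Finset.mul_sum]
    _ = (∏ i, wθ θ i (qq τ i)) * (∏ i, eFac n (qq τ i)) := by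
        rw [W_split, J_split]



def cnt (j : Fin n) : Sym2 (Fin n) → ℕ :=
  Sym2.lift ⟨fun a b => (if a = j then 1 else 0) + (if b = j then 1 else 0),
    fun _ _ => add_comm _ _⟩

lemma cnt_card (g : Fin n → Sym2 (Fin n)) (h : Fin n × Fin 2 → Fin n)
    (hrows : ∀ i, s(h (i, 0), h (i, 1)) = g i) (j : Fin n) :
    (Finset.univ.filter fun x => h x = j).card = ∑ i, cnt j (g i) := by
  rw [Finset.card_filter]
  rw [Fintype.sum_prod_type]
  refine Finset.sum_congr rfl fun i _ => ?_
  rw [Fin.sum_univ_two, ← hrows i]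
  rfl

lemma col_two (τ : Perm (Fin n × Fin 2)) (j : Fin n) :
    (Finset.univ.filter fun x : Fin n × Fin 2 => (τ x).1 = j).card = 2 := by
  have h1 : (Finset.univ.filter fun x : Fin n × Fin 2 => (τ x).1 = j)
      = (Finset.univ.filter fun y : Fin n × Fin 2 => y.1 = j).map
          ⟨τ.symm, τ.symm.injective⟩ := by
    ext x
    simp only [Finset.mem_filter, Finset.mem_univ, true_and, Finset.mem_map,
      Function.Embedding.coeFn_mk]
    constructor
    · intro hx
      exact ⟨τ x, hx, τ.symm_apply_apply x⟩
    · rintro ⟨y, hy, rfl⟩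
      rwa [τ.apply_symm_apply]
  rw [h1, Finset.card_map]
  have h2 : (Finset.univ.filter fun y : Fin n × Fin 2 => y.1 = j)
      = {(j, 0), (j, 1)} := by
    ext ⟨yi, ym⟩
    simp only [Finset.mem_filter, Finset.mem_univ, true_and, Finset.mem_insert,
      Finset.mem_singleton, Prod.mk.injEq]
    constructor
    · rintro rfl
      fin_cases ym
      · exact Or.inl ⟨rfl, rfl⟩
      · exact Or.inr ⟨rfl, rfl⟩
    · rintro (⟨rfl, rfl⟩ | ⟨rfl, rfl⟩) <;> rfl
  rw [h2]
  rw [Finset.card_insert_of_notMem (by simp), Finset.card_singleton]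

/-- number of permutations lying over a balanced `h` is `2 ^ n` -/
lemma count_perm_over (h : Fin n × Fin 2 → Fin n)
    (hbal : ∀ j, (Finset.univ.filter fun x => h x = j).card = 2) :
    Fintype.card {τ : Perm (Fin n × Fin 2) // ∀ x, (τ x).1 = h x} = 2 ^ n := by
  classical
  let T := fun j : Fin n => ({x : Fin n × Fin 2 // h x = j} ≃ {y : Fin n × Fin 2 // y.1 = j})
  let F : {τ : Perm (Fin n × Fin 2) // ∀ x, (τ x).1 = h x} → (∀ j, T j) :=
    fun τs j =>
      { toFun := fun x => ⟨τs.1 x.1, (τs.2 x.1).trans x.2⟩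
        invFun := fun y => ⟨τs.1.symm y.1, by
          have h2 := (τs.2 (τs.1.symm y.1)).symm
          rw [Equiv.apply_symm_apply] at h2
          exact h2.trans y.2⟩
        left_inv := fun x => Subtype.ext (τs.1.symm_apply_apply x.1)
        right_inv := fun y => Subtype.ext (τs.1.apply_symm_apply y.1) }
  have hkey : ∀ (ε : ∀ j, T j) (x' : Fin n × Fin 2) (j : Fin n) (hx : h x' = j),
      ((ε (h x')) ⟨x', rfl⟩).1 = ((ε j) ⟨x', hx⟩).1 := by
    intro ε x' j hx
    subst hx
    rfl
  have hbij : Function.Bijective F := by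
    constructor
    · intro τ1 τ2 hF
      apply Subtype.ext
      apply Equiv.ext
      intro x
      have := congrFun hF (h x)
      have := congrArg (fun e => (e ⟨x, rfl⟩).1) this
      exact this
    · intro ε
      set f : Fin n × Fin 2 → Fin n × Fin 2 := fun x => ((ε (h x)) ⟨x, rfl⟩).1 with hf
      have hf1 : ∀ x, (f x).1 = h x := fun x => ((ε (h x)) ⟨x, rfl⟩).2
      have hinj : Function.Injective f := by
        intro x x' hxx
        have hj : h x = h x' := by rw [← hf1 x, ← hf1 x', hxx]
        have e1 : ((ε (h x)) ⟨x, rfl⟩).1 = ((ε (h x)) ⟨x', hj.symm⟩).1 :=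
          hxx.trans (hkey ε x' (h x) hj.symm)
        have := (ε (h x)).injective (Subtype.ext e1)
        exact congrArg Subtype.val this
      let τ : Perm (Fin n × Fin 2) :=
        Equiv.ofBijective f (Finite.injective_iff_bijective.mp hinj)
      refine ⟨⟨τ, hf1⟩, ?_⟩
      funext j
      apply Equiv.ext
      rintro ⟨x, hx⟩
      apply Subtype.ext
      show (τ x) = ((ε j) ⟨x, hx⟩).1
      have : τ x = f x := rfl
      rw [this, hf]
      exact hkey ε x j hx
  rw [Fintype.card_of_bijective hbij]
  rw [Fintype.card_pi]
  have hcard : ∀ j, Fintype.card (T j) = 2 := by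
    intro j
    have hc1 : Fintype.card {x : Fin n × Fin 2 // h x = j} = 2 := by
      rw [Fintype.card_subtype]
      exact hbal j
    have hc2 : Fintype.card {y : Fin n × Fin 2 // y.1 = j} = 2 := by
      rw [Fintype.card_subtype]
      exact col_two 1 j
    rw [Fintype.card_equiv (Fintype.equivOfCardEq (hc1.trans hc2.symm))]
    rw [hc1]
    rfl
  calc ∏ j, Fintype.card (T j) = ∏ j : Fin n, 2 := Finset.prod_congr rfl fun j _ => hcard j
    _ = 2 ^ n := by rw [Finset.prod_const, Finset.card_univ, Fintype.card_fin]


lemma vg_card (g : Fin n → Sym2 (Fin n)) :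
    ((Finset.univ.filter fun v : Fin n → Fin n × Fin n =>
        ∀ i, s((v i).1, (v i).2) = g i).card)
      = ∏ i, Fintype.card {q : Fin n × Fin n // s(q.1, q.2) = g i} := by
  classical
  rw [← Fintype.card_subtype]
  rw [Fintype.card_congr
    (Equiv.subtypePiEquivPi (p := fun i (q : Fin n × Fin n) => s(q.1, q.2) = g i))]
  rw [Fintype.card_pi]

lemma oe_fac (m : Sym2 (Fin n)) :
    (Fintype.card {q : Fin n × Fin n // s(q.1, q.2) = m} : ℝ) * eFac n m
      = 2 ^ (n - 1) := by
  classical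
  induction m using Sym2.ind with
  | _ a b =>
    by_cases hab : a = b
    · subst hab
      have hcard : Fintype.card {q : Fin n × Fin n // s(q.1, q.2) = s(a, a)} = 1 := by
        rw [Fintype.card_subtype]
        have hf : (Finset.univ.filter fun q : Fin n × Fin n => s(q.1, q.2) = s(a, a))
            = {(a, a)} := by
          ext ⟨q1, q2⟩
          simp only [Finset.mem_filter, Finset.mem_univ, true_and, Sym2.eq_iff,
            Finset.mem_singleton, Prod.mk.injEq]
          tauto
        rw [hf, Finset.card_singleton]
      have heq : eFac n s(a, a) = 2 ^ (n - 1) := by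
        have hcc : ({a, a} : Finset (Fin n)).card = 1 := by simp
        show (2:ℝ) ^ (n - ({a, a} : Finset (Fin n)).card) = _
        rw [hcc]
      rw [hcard, heq]
      norm_num
    · have hcard : Fintype.card {q : Fin n × Fin n // s(q.1, q.2) = s(a, b)} = 2 := by
        rw [Fintype.card_subtype]
        have hf : (Finset.univ.filter fun q : Fin n × Fin n => s(q.1, q.2) = s(a, b))
            = {(a, b), (b, a)} := by
          ext ⟨q1, q2⟩
          simp only [Finset.mem_filter, Finset.mem_univ, true_and, Sym2.eq_iff,
            Finset.mem_insert, Finset.mem_singleton, Prod.mk.injEq]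
        rw [hf, Finset.card_insert_of_notMem (by
          simp only [Finset.mem_singleton, Prod.mk.injEq, not_and]
          intro h; exact absurd h hab), Finset.card_singleton]
      have h2n : 2 ≤ n := by
        have : 1 < Fintype.card (Fin n) := Fintype.one_lt_card_iff_nontrivial.mpr ⟨⟨a, b, hab⟩⟩
        simp at this; omega
      have heq : eFac n s(a, b) = 2 ^ (n - 2) := by
        show (2:ℝ) ^ (n - ({a, b} : Finset (Fin n)).card) = _
        rw [Finset.card_pair hab]
      rw [hcard, heq]
      push_cast
      rw [← pow_succ']
      congr 1
      omega

lemma tau_side (g : Fin n → Sym2 (Fin n)) (τh : Perm (Fin n × Fin 2)) (hτh : qq τh = g) :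
    ((Finset.univ.filter fun τ : Perm (Fin n × Fin 2) => qq τ = g).card : ℝ)
      * ∏ i, eFac n (g i) = 2 ^ (n * n) := by
  classical
  set Vg := Finset.univ.filter
    (fun v : Fin n → Fin n × Fin n => ∀ i, s((v i).1, (v i).2) = g i) with hVg
  have hmap : ∀ τ ∈ (Finset.univ.filter fun τ : Perm (Fin n × Fin 2) => qq τ = g),
      (fun i : Fin n => ((τ (i, 0)).1, (τ (i, 1)).1)) ∈ Vg := by
    intro τ hτ
    rw [Finset.mem_filter] at hτ
    rw [hVg, Finset.mem_filter]
    exact ⟨Finset.mem_univ _, fun i => congrFun hτ.2 i⟩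
  have hcount := Finset.card_eq_sum_card_fiberwise hmap
  have hfib : ∀ v ∈ Vg,
      ((Finset.univ.filter fun τ : Perm (Fin n × Fin 2) => qq τ = g).filter
        (fun τ => (fun i : Fin n => ((τ (i, 0)).1, (τ (i, 1)).1)) = v)).card = 2 ^ n := by
    intro v hv
    have hvv : ∀ i, s((v i).1, (v i).2) = g i := by
      rw [hVg, Finset.mem_filter] at hv
      exact hv.2
    set hvfun : Fin n × Fin 2 → Fin n :=
      fun x => if x.2 = 0 then (v x.1).1 else (v x.1).2 with hvfdef
    have e0 : ∀ i, hvfun (i, 0) = (v i).1 := fun i => if_pos rfl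
    have e1 : ∀ i, hvfun (i, 1) = (v i).2 :=
      fun i => if_neg (show ¬((1 : Fin 2) = 0) by decide)
    have hrv : ∀ i, s(hvfun (i, 0), hvfun (i, 1)) = g i := by
      intro i
      rw [e0, e1]
      exact hvv i
    have hsets : ((Finset.univ.filter fun τ : Perm (Fin n × Fin 2) => qq τ = g).filter
          (fun τ => (fun i : Fin n => ((τ (i, 0)).1, (τ (i, 1)).1)) = v))
        = Finset.univ.filter (fun τ : Perm (Fin n × Fin 2) => ∀ x, (τ x).1 = hvfun x) := by
      ext τ
      simp only [Finset.mem_filter, Finset.mem_univ, true_and]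
      constructor
      · rintro ⟨hq, hh⟩
        rintro ⟨i, m⟩
        fin_cases m
        · show (τ (i, 0)).1 = hvfun (i, 0)
          rw [e0]
          exact congrArg Prod.fst (congrFun hh i)
        · show (τ (i, 1)).1 = hvfun (i, 1)
          rw [e1]
          exact congrArg Prod.snd (congrFun hh i)
      · intro hall
        constructor
        · funext i
          show s((τ (i, 0)).1, (τ (i, 1)).1) = g i
          rw [hall (i, 0), hall (i, 1)]
          exact hrv i
        · funext i
          exact Prod.ext (by rw [hall (i, 0), e0]) (by rw [hall (i, 1), e1])
    rw [hsets, ← Fintype.card_subtype]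
    apply count_perm_over
    intro j
    have hrt : ∀ i, s((fun x : Fin n × Fin 2 => (τh x).1) (i, 0),
        (fun x : Fin n × Fin 2 => (τh x).1) (i, 1)) = g i := fun i => congrFun hτh i
    calc (Finset.univ.filter fun x => hvfun x = j).card
        = ∑ i, cnt j (g i) := cnt_card g hvfun hrv j
      _ = (Finset.univ.filter fun x : Fin n × Fin 2 => (τh x).1 = j).card :=
          (cnt_card g _ hrt j).symm
      _ = 2 := col_two τh j
  have hcard2 : (Finset.univ.filter fun τ : Perm (Fin n × Fin 2) => qq τ = g).card
      = Vg.card * 2 ^ n := by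
    rw [hcount]
    rw [Finset.sum_congr rfl hfib, Finset.sum_const, smul_eq_mul]
  rw [hcard2, vg_card g]
  push_cast
  rw [mul_comm ((∏ i, (Fintype.card {q : Fin n × Fin n // s(q.1, q.2) = g i} : ℝ))) _,
    mul_assoc, ← Finset.prod_mul_distrib]
  have : ∀ i ∈ Finset.univ, (Fintype.card {q : Fin n × Fin n // s(q.1, q.2) = g i} : ℝ)
      * eFac n (g i) = 2 ^ (n - 1) := fun i _ => oe_fac (g i)
  rw [Finset.prod_congr rfl this, Finset.prod_const, Finset.card_univ, Fintype.card_fin,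
    ← pow_mul, ← pow_add]
  congr 1
  cases n with
  | zero => rfl
  | succ k => simp [Nat.succ_sub_one]; ring


lemma invMemIff (π : Perm (Fin n)) (B : Finset (Fin n)) (hinv : ∀ j ∈ B, π j ∈ B) :
    ∀ j, j ∈ B ↔ π j ∈ B := by
  have hsub : B.image π ⊆ B := by
    intro y hy
    obtain ⟨k, hk, rfl⟩ := Finset.mem_image.mp hy
    exact hinv k hk
  have himg : B.image π = B :=
    Finset.eq_of_subset_of_card_le hsub
      (le_of_eq (Finset.card_image_of_injective B π.injective).symm)
  intro j
  constructor
  · exact hinv j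
  · intro hj
    rw [← himg] at hj
    obtain ⟨k, hk, hkj⟩ := Finset.mem_image.mp hj
    rwa [← π.injective hkj]

lemma inv_mem_pow (π : Perm (Fin n)) (B : Finset (Fin n)) (hinv : ∀ j ∈ B, π j ∈ B)
    (k : ℕ) : ∀ j ∈ B, (π ^ k) j ∈ B := by
  induction k with
  | zero => intro j hj; simpa using hj
  | succ m ih =>
    intro j hj
    rw [pow_succ, Equiv.Perm.mul_apply]
    exact ih _ (hinv j hj)

lemma inv_finsets_card (π : Perm (Fin n)) :
    (Finset.univ.filter fun B : Finset (Fin n) =>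
        B ⊆ π.support ∧ ∀ j ∈ B, π j ∈ B).card
      = 2 ^ (Multiset.card π.cycleType) := by
  classical
  rw [← Fintype.card_subtype]
  have E : {B : Finset (Fin n) // B ⊆ π.support ∧ ∀ j ∈ B, π j ∈ B}
      ≃ Finset {f // f ∈ π.cycleFactorsFinset} :=
    { toFun := fun B => Finset.univ.filter
        (fun f : {f // f ∈ π.cycleFactorsFinset} => (f : Perm (Fin n)).support ⊆ B.1)
      invFun := fun C => ⟨π.support.filter
          (fun j => ∀ h : π.cycleOf j ∈ π.cycleFactorsFinset, (⟨π.cycleOf j, h⟩ :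
            {f // f ∈ π.cycleFactorsFinset}) ∈ C), by
        constructor
        · exact Finset.filter_subset _ _
        · intro j hj
          rw [Finset.mem_filter] at hj
          rw [Finset.mem_filter]
          refine ⟨Equiv.Perm.apply_mem_support.mpr hj.1, ?_⟩
          intro h
          have hco : π.cycleOf (π j) = π.cycleOf j := Equiv.Perm.cycleOf_self_apply π j
          have h' : π.cycleOf j ∈ π.cycleFactorsFinset := by rwa [hco] at h
          have heqs : (⟨π.cycleOf (π j), h⟩ : {f // f ∈ π.cycleFactorsFinset})
              = ⟨π.cycleOf j, h'⟩ := Subtype.ext hco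
          rw [heqs]
          exact hj.2 h'⟩
      left_inv := by
        rintro ⟨B, hsub, hinv⟩
        apply Subtype.ext
        ext j
        simp only [Finset.mem_filter, Finset.mem_univ, true_and]
        constructor
        · rintro ⟨hjs, hall⟩
          have h : π.cycleOf j ∈ π.cycleFactorsFinset :=
            Equiv.Perm.cycleOf_mem_cycleFactorsFinset_iff.mpr hjs
          have hsupsub : (π.cycleOf j).support ⊆ B := hall h
          apply hsupsub
          rw [Equiv.Perm.mem_support_cycleOf_iff]
          exact ⟨Equiv.Perm.SameCycle.refl _ _, hjs⟩
        · intro hjB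
          refine ⟨hsub hjB, ?_⟩
          intro h
          intro y hy
          rw [Equiv.Perm.mem_support_cycleOf_iff] at hy
          obtain ⟨k, -, hk⟩ := hy.1.exists_pow_eq'
          rw [← hk]
          exact inv_mem_pow π B hinv k j hjB
      right_inv := by
        intro C
        ext ⟨f, hf⟩
        simp only [Finset.mem_filter, Finset.mem_univ, true_and]
        have hcyc : f.IsCycle := (Equiv.Perm.mem_cycleFactorsFinset_iff.mp hf).1
        constructor
        · intro hsup
          obtain ⟨j, hj⟩ := hcyc.nonempty_support
          have hjB := hsup hj
          rw [Finset.mem_filter] at hjB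
          have hfc : f = π.cycleOf j := Equiv.Perm.cycle_is_cycleOf hj hf
          have h' : π.cycleOf j ∈ π.cycleFactorsFinset := hfc ▸ hf
          have heqs : (⟨f, hf⟩ : {f // f ∈ π.cycleFactorsFinset})
              = ⟨π.cycleOf j, h'⟩ := Subtype.ext hfc
          rw [heqs]
          exact hjB.2 h'
        · intro hC
          intro y hy
          rw [Finset.mem_filter]
          have hπy : π y = f y := ((Equiv.Perm.mem_cycleFactorsFinset_iff.mp hf).2 y hy).symm
          have hysup : y ∈ π.support := by
            rw [Equiv.Perm.mem_support, hπy]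
            exact Equiv.Perm.mem_support.mp hy
          refine ⟨hysup, ?_⟩
          intro h
          have hfc : f = π.cycleOf y := Equiv.Perm.cycle_is_cycleOf hy hf
          have heqs : (⟨π.cycleOf y, h⟩ : {f // f ∈ π.cycleFactorsFinset})
              = ⟨f, hf⟩ := Subtype.ext hfc.symm
          rw [heqs]
          exact hC }
  rw [Fintype.card_congr E, Fintype.card_finset, Fintype.card_coe]
  congr 1
  rw [Equiv.Perm.cycleType_def, Multiset.card_map]
  rfl

def GB (π : Perm (Fin n)) (B : Finset (Fin n)) : Perm (Fin n) :=
  if h : ∀ j ∈ B, π j ∈ B then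
    Equiv.Perm.ofSubtype (π.subtypePerm (fun j => (invMemIff π B h j).symm)) else 1

lemma GB_mem (π : Perm (Fin n)) (B : Finset (Fin n)) (h : ∀ j ∈ B, π j ∈ B)
    {j : Fin n} (hj : j ∈ B) : GB π B j = π j := by
  rw [GB, dif_pos h, Equiv.Perm.ofSubtype_apply_of_mem _ hj]
  rfl

lemma GB_not_mem (π : Perm (Fin n)) (B : Finset (Fin n)) {j : Fin n} (hj : j ∉ B) :
    GB π B j = j := by
  rw [GB]
  split_ifs with h
  · exact Equiv.Perm.ofSubtype_apply_of_not_mem _ hj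
  · rfl

lemma GB_inv_mem (π : Perm (Fin n)) (B : Finset (Fin n)) (h : ∀ j ∈ B, π j ∈ B)
    {j : Fin n} (hj : j ∈ B) : (GB π B)⁻¹ j = π⁻¹ j := by
  have hmem : π⁻¹ j ∈ B := by
    have := invMemIff π B h (π⁻¹ j)
    rw [Equiv.Perm.apply_inv_self] at this
    exact this.mpr hj
  have h1 : GB π B (π⁻¹ j) = j := by
    rw [GB_mem π B h hmem, Equiv.Perm.apply_inv_self]
  have h2 := Equiv.Perm.inv_apply_self (GB π B) (π⁻¹ j)
  rw [h1] at h2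
  exact h2

lemma GB_inv_not_mem (π : Perm (Fin n)) (B : Finset (Fin n)) {j : Fin n} (hj : j ∉ B) :
    (GB π B)⁻¹ j = j := by
  have h1 : GB π B j = j := GB_not_mem π B hj
  calc (GB π B)⁻¹ j = (GB π B)⁻¹ (GB π B j) := by rw [h1]
    _ = j := Equiv.Perm.inv_apply_self _ _

lemma pair_fiber_card (σ1 σ2 : Perm (Fin n)) :
    (Finset.univ.filter fun p : Perm (Fin n) × Perm (Fin n) =>
        ∀ i, s(p.1 i, p.2 i) = s(σ1 i, σ2 i)).card
      = 2 ^ (Multiset.card (σ1 * σ2⁻¹).cycleType) := by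
  classical
  set π := σ1 * σ2⁻¹ with hπdef
  have hd : ∀ p : Perm (Fin n) × Perm (Fin n),
      (∀ i, s(p.1 i, p.2 i) = s(σ1 i, σ2 i)) → ∀ j,
      (p.1 (σ2⁻¹ j) = π j ∧ p.2 (σ2⁻¹ j) = j)
        ∨ (p.1 (σ2⁻¹ j) = j ∧ p.2 (σ2⁻¹ j) = π j) := by
    intro p hp j
    have h := hp (σ2⁻¹ j)
    rw [Sym2.eq_iff] at h
    have e1 : σ1 (σ2⁻¹ j) = π j := rfl
    have e2 : σ2 (σ2⁻¹ j) = j := Equiv.Perm.apply_inv_self σ2 j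
    rw [e1, e2] at h
    exact h
  rw [← inv_finsets_card π]
  apply Finset.card_nbij'
    (i := fun p : Perm (Fin n) × Perm (Fin n) =>
      π.support.filter (fun j => p.1 (σ2⁻¹ j) = j))
    (j := fun B => (π * (GB π B)⁻¹ * σ2, GB π B * σ2))
  -- i maps into invariant sets
  · intro p hp
    rw [Finset.mem_coe, Finset.mem_filter] at hp
    have hp2 := hp.2
    rw [Finset.mem_coe, Finset.mem_filter]
    refine ⟨Finset.mem_univ _, Finset.filter_subset _ _, ?_⟩
    intro j hj
    rw [Finset.mem_filter] at hj
    obtain ⟨hjs, hj1⟩ := hj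
    rw [Finset.mem_filter]
    refine ⟨Equiv.Perm.apply_mem_support.mpr hjs, ?_⟩
    by_contra hne
    -- then case A at π j : p.2 (σ2⁻¹ (π j)) = π j
    have hA : p.2 (σ2⁻¹ (π j)) = π j := by
      rcases hd p hp2 (π j) with ⟨-, h2⟩ | ⟨h1, -⟩
      · exact h2
      · exact absurd h1 hne
    -- and case B at j : p.2 (σ2⁻¹ j) = π j
    have hB : p.2 (σ2⁻¹ j) = π j := by
      rcases hd p hp2 j with ⟨h1, -⟩ | ⟨-, h2⟩
      · exfalso
        rw [hj1] at h1
        exact (Equiv.Perm.mem_support.mp hjs) h1.symm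
      · exact h2
    have h5 : σ2⁻¹ j = σ2⁻¹ (π j) := p.2.injective (hB.trans hA.symm)
    have h6 : j = π j := (σ2⁻¹ : Perm (Fin n)).injective h5
    exact (Equiv.Perm.mem_support.mp hjs) h6.symm
  -- j maps into the fiber
  · intro B hB
    rw [Finset.mem_coe, Finset.mem_filter] at hB
    obtain ⟨-, hsub, hinv⟩ := hB
    rw [Finset.mem_coe, Finset.mem_filter]
    refine ⟨Finset.mem_univ _, ?_⟩
    intro i
    set j := σ2 i with hj
    have hss : σ2⁻¹ (σ2 i) = i := Equiv.Perm.inv_apply_self σ2 i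
    have e1 : σ1 i = π (σ2 i) := by
      show σ1 i = σ1 (σ2⁻¹ (σ2 i))
      rw [hss]
    have eρ1 : (π * (GB π B)⁻¹ * σ2) i = π ((GB π B)⁻¹ (σ2 i)) := rfl
    have eρ2 : (GB π B * σ2) i = GB π B (σ2 i) := rfl
    by_cases hmem : σ2 i ∈ B
    · rw [eρ1, eρ2, GB_inv_mem π B hinv hmem, GB_mem π B hinv hmem,
        Equiv.Perm.apply_inv_self, e1]
      rw [Sym2.eq_iff]
      right
      exact ⟨rfl, rfl⟩
    · rw [eρ1, eρ2, GB_inv_not_mem π B hmem, GB_not_mem π B hmem, e1]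
  -- left inverse
  · intro p hp
    rw [Finset.mem_coe, Finset.mem_filter] at hp
    have hp2 := hp.2
    set B := π.support.filter (fun j => p.1 (σ2⁻¹ j) = j) with hBdef
    have hinv : ∀ j ∈ B, π j ∈ B := by
      -- same as in `hi`; reprove
      intro j hj
      rw [hBdef, Finset.mem_filter] at hj
      obtain ⟨hjs, hj1⟩ := hj
      rw [hBdef, Finset.mem_filter]
      refine ⟨Equiv.Perm.apply_mem_support.mpr hjs, ?_⟩
      by_contra hne
      have hA : p.2 (σ2⁻¹ (π j)) = π j := by
        rcases hd p hp2 (π j) with ⟨-, h2⟩ | ⟨h1, -⟩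
        · exact h2
        · exact absurd h1 hne
      have hB : p.2 (σ2⁻¹ j) = π j := by
        rcases hd p hp2 j with ⟨h1, -⟩ | ⟨-, h2⟩
        · exfalso
          rw [hj1] at h1
          exact (Equiv.Perm.mem_support.mp hjs) h1.symm
        · exact h2
      have h5 : σ2⁻¹ j = σ2⁻¹ (π j) := p.2.injective (hB.trans hA.symm)
      have h6 : j = π j := (σ2⁻¹ : Perm (Fin n)).injective h5
      exact (Equiv.Perm.mem_support.mp hjs) h6.symm
    apply Prod.ext
    · apply Equiv.ext
      intro i
      set j := σ2 i with hjdef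
      have eρ1 : (π * (GB π B)⁻¹ * σ2) i = π ((GB π B)⁻¹ (σ2 i)) := rfl
      have hss : σ2⁻¹ (σ2 i) = i := Equiv.Perm.inv_apply_self σ2 i
      rw [eρ1]
      by_cases hmem : σ2 i ∈ B
      · rw [GB_inv_mem π B hinv hmem, Equiv.Perm.apply_inv_self]
        rw [hBdef, Finset.mem_filter] at hmem
        have := hmem.2
        rw [hss] at this
        exact this.symm
      · rw [GB_inv_not_mem π B hmem]
        by_cases hsupp : σ2 i ∈ π.support
        · have hnfix : ¬ p.1 (σ2⁻¹ (σ2 i)) = σ2 i := by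
            intro hcon
            exact hmem (by rw [hBdef, Finset.mem_filter]; exact ⟨hsupp, hcon⟩)
          rcases hd p hp2 (σ2 i) with ⟨h1, -⟩ | ⟨h1, -⟩
          · rw [hss] at h1
            exact h1.symm
          · rw [hss] at h1
            rw [hss] at hnfix
            exact absurd h1 hnfix
        · have hfix : π (σ2 i) = σ2 i := Equiv.Perm.notMem_support.mp hsupp
          rw [hfix]
          rcases hd p hp2 (σ2 i) with ⟨h1, -⟩ | ⟨h1, -⟩
          · rw [hss, hfix] at h1
            exact h1.symm
          · rw [hss] at h1
            exact h1.symm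
    · apply Equiv.ext
      intro i
      have eρ2 : (GB π B * σ2) i = GB π B (σ2 i) := rfl
      have hss : σ2⁻¹ (σ2 i) = i := Equiv.Perm.inv_apply_self σ2 i
      rw [eρ2]
      by_cases hmem : σ2 i ∈ B
      · rw [GB_mem π B hinv hmem]
        rw [hBdef, Finset.mem_filter] at hmem
        obtain ⟨hsupp, hfix1⟩ := hmem
        rcases hd p hp2 (σ2 i) with ⟨h1, -⟩ | ⟨-, h2⟩
        · exfalso
          rw [h1] at hfix1
          exact (Equiv.Perm.mem_support.mp hsupp) hfix1
        · rw [hss] at h2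
          exact h2.symm
      · rw [GB_not_mem π B hmem]
        by_cases hsupp : σ2 i ∈ π.support
        · have hnfix : ¬ p.1 (σ2⁻¹ (σ2 i)) = σ2 i := by
            intro hcon
            exact hmem (by rw [hBdef, Finset.mem_filter]; exact ⟨hsupp, hcon⟩)
          rcases hd p hp2 (σ2 i) with ⟨-, h2⟩ | ⟨h1, -⟩
          · rw [hss] at h2
            exact h2.symm
          · rw [hss] at h1
            rw [hss] at hnfix
            exact absurd h1 hnfix
        · have hfix : π (σ2 i) = σ2 i := Equiv.Perm.notMem_support.mp hsupp
          rcases hd p hp2 (σ2 i) with ⟨-, h2⟩ | ⟨-, h2⟩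
          · rw [hss] at h2
            exact h2.symm
          · rw [hss, hfix] at h2
            exact h2.symm
  -- right inverse
  · intro B hB
    rw [Finset.mem_coe, Finset.mem_filter] at hB
    obtain ⟨-, hsub, hinv⟩ := hB
    ext j
    rw [Finset.mem_filter]
    have hss : σ2 (σ2⁻¹ j) = j := Equiv.Perm.apply_inv_self σ2 j
    have eρ1 : (π * (GB π B)⁻¹ * σ2) (σ2⁻¹ j) = π ((GB π B)⁻¹ (σ2 (σ2⁻¹ j))) := rfl
    constructor
    · rintro ⟨hjs, hfix⟩
      rw [eρ1, hss] at hfix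
      by_contra hmem
      rw [GB_inv_not_mem π B hmem] at hfix
      exact (Equiv.Perm.mem_support.mp hjs) hfix
    · intro hjB
      refine ⟨hsub hjB, ?_⟩
      rw [eρ1, hss, GB_inv_mem π B hinv hjB, Equiv.Perm.apply_inv_self]



lemma tau_of_pair (σ1 σ2 : Perm (Fin n)) :
    ∃ τ : Perm (Fin n × Fin 2), qq τ = fun i => s(σ1 i, σ2 i) := by
  classical
  refine ⟨{ toFun := fun x => (if x.2 = 0 then σ1 x.1 else σ2 x.1, x.2)
            invFun := fun y => (if y.2 = 0 then σ1⁻¹ y.1 else σ2⁻¹ y.1, y.2)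
            left_inv := by
              rintro ⟨i, m⟩
              by_cases hm : m = 0 <;> simp [hm]
            right_inv := by
              rintro ⟨j, m⟩
              by_cases hm : m = 0 <;> simp [hm] }, ?_⟩
  funext i
  simp only [qq, Equiv.coe_fn_mk]
  norm_num

lemma fintwo_succ : ∀ u v : Fin 2, u ≠ v → v = u + 1 := by decide

def afl (n : ℕ) : Perm (Fin n × Fin 2) :=
  Equiv.prodCongr (Equiv.refl (Fin n)) (Equiv.addRight (1 : Fin 2))

lemma afl_apply (x : Fin n × Fin 2) : afl n x = (x.1, x.2 + 1) := rfl

lemma afl_invol : afl n * afl n = 1 := by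
  apply Equiv.ext
  rintro ⟨i, m⟩
  show ((i, m + 1 + 1) : Fin n × Fin 2) = (i, m)
  have : m + 1 + 1 = m := by fin_cases m <;> decide
  rw [this]

lemma fin2_add_one_ne (m : Fin 2) : m + 1 ≠ m := by revert m; decide

lemma afl_nofix (x : Fin n × Fin 2) : afl n x ≠ x := by
  rw [afl_apply]
  intro h
  exact fin2_add_one_ne x.2 (congrArg Prod.snd h)

lemma pair_of_tau (τ : Perm (Fin n × Fin 2)) :
    ∃ p : Perm (Fin n) × Perm (Fin n), (fun i => s(p.1 i, p.2 i)) = qq τ := by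
  classical
  set h : Fin n × Fin 2 → Fin n := fun x => (τ x).1 with hdef
  set b : Perm (Fin n × Fin 2) := τ⁻¹ * afl n * τ with hbdef
  have hbb : b * b = 1 := by
    have : b * b = τ⁻¹ * (afl n * afl n) * τ := by rw [hbdef]; group
    rw [this, afl_invol]
    group
  have hb' : ∀ x, b x ≠ x := by
    intro x hx
    apply afl_nofix (τ x)
    have h1 : τ (b x) = afl n (τ x) := by
      rw [hbdef]
      show τ ((τ⁻¹) ((afl n) (τ x))) = _
      rw [Equiv.Perm.apply_inv_self]
    rw [hx] at h1
    exact h1.symm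
  obtain ⟨χ, hχa, hχb⟩ := key2 (afl n) b afl_invol hbb afl_nofix hb'
  -- the coloring flips along both pairings
  have hflip : ∀ (i : Fin n) (m : Fin 2), χ (i, m + 1) = !χ (i, m) := fun i m => hχa (i, m)
  set sel : Fin n → Fin 2 := fun i => if χ (i, 0) then 0 else 1 with hseldef
  have hsel_true : ∀ i, χ (i, sel i) = true := by
    intro i
    by_cases hc : χ (i, 0)
    · simp [hseldef, hc]
    · have hcc : χ (i, 0) = false := by simpa using hc
      have hg : sel i = 1 := by simp [hseldef, hcc]
      rw [hg, show (1 : Fin 2) = 0 + 1 by decide, hflip i 0, hcc]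
      rfl
  have hsel_false : ∀ i, χ (i, sel i + 1) = false := by
    intro i
    rw [hflip i (sel i), hsel_true i]
    rfl
  -- same column means b-related
  have hcol : ∀ x y, h x = h y → x ≠ y → y = b x := by
    intro x y hxy hne
    have hτne : τ x ≠ τ y := fun hc => hne (τ.injective hc)
    have hsnd : (τ y).2 = (τ x).2 + 1 := by
      apply fintwo_succ
      intro hc
      exact hτne (Prod.ext hxy (by rw [hc]))
    have hτy : τ y = afl n (τ x) := by
      rw [afl_apply]
      exact Prod.ext hxy.symm hsnd
    have : y = τ.symm (afl n (τ x)) := by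
      rw [← hτy, Equiv.symm_apply_apply]
    rw [this, hbdef]
    rfl
  -- injectivity of both selectors
  have hinj : ∀ (c : Bool), Function.Injective (fun i => h (i, if c then sel i else sel i + 1)) := by
    intro c i i' heq
    set x := (i, if c then sel i else sel i + 1) with hx
    set y := (i', if c then sel i' else sel i' + 1) with hy
    have hχx : χ x = χ y := by
      cases c
      · simp only [hx, hy, Bool.false_eq_true, if_false, hsel_false]
      · simp only [hx, hy, if_true, hsel_true]
    by_cases hxy : x = y
    · exact congrArg Prod.fst hxy
    · exfalso
      have hb := hcol x y heq hxy
      have hbc := hχb x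
      rw [← hb, hχx] at hbc
      simp at hbc
  let σ1 : Perm (Fin n) := Equiv.ofBijective _ (Finite.injective_iff_bijective.mp (hinj true))
  let σ2 : Perm (Fin n) := Equiv.ofBijective _ (Finite.injective_iff_bijective.mp (hinj false))
  refine ⟨(σ1, σ2), ?_⟩
  funext i
  show s(h (i, sel i), h (i, sel i + 1)) = s(h (i, 0), h (i, 1))
  by_cases hc : χ (i, 0)
  · have hs : sel i = 0 := by simp [hseldef, hc]
    rw [hs]
    have : (0 : Fin 2) + 1 = 1 := by decide
    rw [this]
  · have hs : sel i = 1 := by simp [hseldef, hc]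
    rw [hs]
    have : (1 : Fin 2) + 1 = 0 := by decide
    rw [this]
    exact Sym2.eq_swap


def qp (p : Perm (Fin n) × Perm (Fin n)) : Fin n → Sym2 (Fin n) :=
  fun i => s(p.1 i, p.2 i)

/-- per-fiber core identity -/
lemma core_fiber (g : Fin n → Sym2 (Fin n)) :
    ((Finset.univ.filter fun τ : Perm (Fin n × Fin 2) => qq τ = g).card : ℝ)
        * ∏ i, eFac n (g i)
      = 2 ^ (n * n) * ∑ p ∈ (Finset.univ.filter fun p : Perm (Fin n) × Perm (Fin n) =>
          qp p = g), ((2:ℝ) ^ (Multiset.card (p.1 * p.2⁻¹).cycleType))⁻¹ := by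
  classical
  by_cases hne : ∃ τ : Perm (Fin n × Fin 2), qq τ = g
  · obtain ⟨τh, hτh⟩ := hne
    rw [tau_side g τh hτh]
    set s := Finset.univ.filter fun p : Perm (Fin n) × Perm (Fin n) => qp p = g with hs
    have hcard : ∀ p ∈ s, ((2:ℝ) ^ (Multiset.card (p.1 * p.2⁻¹).cycleType)) = (s.card : ℝ) := by
      intro p hp
      rw [hs, Finset.mem_filter] at hp
      have hfeq : (Finset.univ.filter fun p' : Perm (Fin n) × Perm (Fin n) =>
          ∀ i, s(p'.1 i, p'.2 i) = s(p.1 i, p.2 i)) = s := by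
        rw [hs]
        apply Finset.filter_congr
        intro p' _
        constructor
        · intro hall
          rw [← hp.2]
          funext i
          exact hall i
        · intro hqp
          intro i
          have h1 : qp p' i = g i := congrFun hqp i
          have h2 : qp p i = g i := congrFun hp.2 i
          rw [show s(p'.1 i, p'.2 i) = qp p' i from rfl, h1, ← h2]
          rfl
      have := pair_fiber_card p.1 p.2
      rw [hfeq] at this
      rw [this]
      push_cast
      ring
    have hnonempty : s.Nonempty := by
      obtain ⟨p, hp⟩ := pair_of_tau τh
      refine ⟨p, ?_⟩
      rw [hs, Finset.mem_filter]
      exact ⟨Finset.mem_univ _, by rw [show qp p = fun i => s(p.1 i, p.2 i) from rfl, hp, hτh]⟩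
    have hsum : ∑ p ∈ s, ((2:ℝ) ^ (Multiset.card (p.1 * p.2⁻¹).cycleType))⁻¹ = 1 := by
      have : ∀ p ∈ s, ((2:ℝ) ^ (Multiset.card (p.1 * p.2⁻¹).cycleType))⁻¹
          = ((s.card : ℝ))⁻¹ := by
        intro p hp
        rw [hcard p hp]
      rw [Finset.sum_congr rfl this, Finset.sum_const, nsmul_eq_mul]
      apply mul_inv_cancel₀
      have := Finset.card_pos.mpr hnonempty
      positivity
    rw [hsum, mul_one]
  · push_neg at hne
    have h1 : (Finset.univ.filter fun τ : Perm (Fin n × Fin 2) => qq τ = g) = ∅ := by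
      apply Finset.filter_eq_empty_iff.mpr
      intro τ _
      exact hne τ
    have h2 : (Finset.univ.filter fun p : Perm (Fin n) × Perm (Fin n) => qp p = g) = ∅ := by
      apply Finset.filter_eq_empty_iff.mpr
      intro p _
      intro hqp
      obtain ⟨τ, hτ⟩ := tau_of_pair p.1 p.2
      exact hne τ (by rw [hτ, ← hqp]; rfl)
    rw [h1, h2]
    simp

lemma main_identity (θ : Matrix (Fin n) (Fin n) ℝ) :
    ∑ P : Fin n → Fin n → Perm (Fin 2), perm' (liftMat θ P)
      = 2 ^ (n * n) * ∑ p : Perm (Fin n) × Perm (Fin n),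
          (∏ i, wθ θ i (qp p i)) * ((2:ℝ) ^ (Multiset.card (p.1 * p.2⁻¹).cycleType))⁻¹ := by
  classical
  rw [step1 θ]
  rw [← Finset.sum_fiberwise Finset.univ (fun τ : Perm (Fin n × Fin 2) => qq τ)
    (fun τ => (∏ i, wθ θ i (qq τ i)) * (∏ i, eFac n (qq τ i)))]
  rw [← Finset.sum_fiberwise Finset.univ (fun p : Perm (Fin n) × Perm (Fin n) => qp p)
    (fun p => (∏ i, wθ θ i (qp p i)) * ((2:ℝ) ^ (Multiset.card (p.1 * p.2⁻¹).cycleType))⁻¹)]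
  rw [Finset.mul_sum]
  refine Finset.sum_congr rfl fun g _ => ?_
  have hτside : ∑ τ ∈ Finset.univ.filter (fun τ : Perm (Fin n × Fin 2) => qq τ = g),
      (∏ i, wθ θ i (qq τ i)) * (∏ i, eFac n (qq τ i))
      = ((Finset.univ.filter fun τ : Perm (Fin n × Fin 2) => qq τ = g).card : ℝ)
        * ((∏ i, wθ θ i (g i)) * (∏ i, eFac n (g i))) := by
    rw [Finset.sum_congr rfl (fun τ hτ => by
      rw [(Finset.mem_filter.mp hτ).2])]
    rw [Finset.sum_const, nsmul_eq_mul]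
  have hpside : ∑ p ∈ Finset.univ.filter (fun p : Perm (Fin n) × Perm (Fin n) => qp p = g),
      (∏ i, wθ θ i (qp p i)) * ((2:ℝ) ^ (Multiset.card (p.1 * p.2⁻¹).cycleType))⁻¹
      = (∏ i, wθ θ i (g i)) * ∑ p ∈ Finset.univ.filter
          (fun p : Perm (Fin n) × Perm (Fin n) => qp p = g),
          ((2:ℝ) ^ (Multiset.card (p.1 * p.2⁻¹).cycleType))⁻¹ := by
    rw [Finset.mul_sum]
    refine Finset.sum_congr rfl fun p hp => ?_
    rw [(Finset.mem_filter.mp hp).2]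
  rw [hτside, hpside]
  have := core_fiber g
  calc ((Finset.univ.filter fun τ : Perm (Fin n × Fin 2) => qq τ = g).card : ℝ)
        * ((∏ i, wθ θ i (g i)) * (∏ i, eFac n (g i)))
      = (∏ i, wθ θ i (g i)) * (((Finset.univ.filter
          fun τ : Perm (Fin n × Fin 2) => qq τ = g).card : ℝ) * ∏ i, eFac n (g i)) := by
        ring
    _ = (∏ i, wθ θ i (g i)) * (2 ^ (n * n) * ∑ p ∈ (Finset.univ.filter
          fun p : Perm (Fin n) × Perm (Fin n) => qp p = g),
          ((2:ℝ) ^ (Multiset.card (p.1 * p.2⁻¹).cycleType))⁻¹) := by rw [this]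
    _ = _ := by ring

lemma avg_eq (θ : Matrix (Fin n) (Fin n) ℝ) :
    avgLiftPerm n 2 θ = ∑ σ₁ : Perm (Fin n), ∑ σ₂ : Perm (Fin n),
        (∏ i, θ i (σ₁ i)) * (∏ i, θ i (σ₂ i))
          * ((2:ℝ) ^ (Multiset.card (σ₁ * σ₂⁻¹).cycleType))⁻¹ := by
  classical
  have hcard : (Fintype.card (Fin n → Fin n → Perm (Fin 2)) : ℝ) = 2 ^ (n * n) := by
    rw [Fintype.card_fun, Fintype.card_fun, Fintype.card_perm, Fintype.card_fin,
      Fintype.card_fin]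
    push_cast
    rw [← pow_mul]
    norm_num [Nat.factorial]
  rw [avgLiftPerm, main_identity θ, hcard]
  rw [mul_comm ((2:ℝ) ^ (n * n)) _, mul_div_assoc, div_self (by positivity), mul_one]
  rw [Fintype.sum_prod_type]
  refine Finset.sum_congr rfl fun σ₁ _ => Finset.sum_congr rfl fun σ₂ _ => ?_
  congr 1
  show ∏ i, wθ θ i s(σ₁ i, σ₂ i) = _
  rw [← Finset.prod_mul_distrib]
  rfl

lemma statement16_aux (n : ℕ) (hn : 1 ≤ n)
    (θ : Matrix (Fin n) (Fin n) ℝ) (hθ : ∀ i j, 0 ≤ θ i j)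
    (hex : ∃ σ : Equiv.Perm (Fin n), 0 < ∏ i, θ i (σ i)) :
    perm' θ / (avgLiftPerm n 2 θ) ^ (1 / (2 : ℝ)) =
      (∑ σ₁ : Equiv.Perm (Fin n), ∑ σ₂ : Equiv.Perm (Fin n),
          ((∏ i, θ i (σ₁ i)) / perm' θ) * ((∏ i, θ i (σ₂ i)) / perm' θ) *
            ((2 : ℝ) ^ (Multiset.card (σ₁ * σ₂⁻¹).cycleType))⁻¹) ^ (-(1 / (2 : ℝ))) := by
  classical
  obtain ⟨σ₀, hσ₀⟩ := hex
  have hP : 0 < perm' θ := by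
    apply Finset.sum_pos'
    · intro σ _
      exact Finset.prod_nonneg fun i _ => hθ i (σ i)
    · exact ⟨σ₀, Finset.mem_univ _, hσ₀⟩
  set S := ∑ σ₁ : Perm (Fin n), ∑ σ₂ : Perm (Fin n),
      (∏ i, θ i (σ₁ i)) * (∏ i, θ i (σ₂ i))
        * ((2:ℝ) ^ (Multiset.card (σ₁ * σ₂⁻¹).cycleType))⁻¹ with hSdef
  have hSpos : 0 < S := by
    rw [hSdef]
    apply Finset.sum_pos'
    · intro σ₁ _
      apply Finset.sum_nonneg
      intro σ₂ _
      have h1 : (0:ℝ) ≤ ∏ i, θ i (σ₁ i) := Finset.prod_nonneg fun i _ => hθ i (σ₁ i)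
      have h2 : (0:ℝ) ≤ ∏ i, θ i (σ₂ i) := Finset.prod_nonneg fun i _ => hθ i (σ₂ i)
      positivity
    · refine ⟨σ₀, Finset.mem_univ _, ?_⟩
      apply Finset.sum_pos'
      · intro σ₂ _
        have h2 : (0:ℝ) ≤ ∏ i, θ i (σ₂ i) := Finset.prod_nonneg fun i _ => hθ i (σ₂ i)
        positivity
      · refine ⟨σ₀, Finset.mem_univ _, ?_⟩
        rw [mul_inv_cancel, Equiv.Perm.cycleType_one]
        simpa using mul_pos hσ₀ hσ₀
  have hA : avgLiftPerm n 2 θ = S := avg_eq θ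
  have hRHS : (∑ σ₁ : Equiv.Perm (Fin n), ∑ σ₂ : Equiv.Perm (Fin n),
      ((∏ i, θ i (σ₁ i)) / perm' θ) * ((∏ i, θ i (σ₂ i)) / perm' θ) *
        ((2 : ℝ) ^ (Multiset.card (σ₁ * σ₂⁻¹).cycleType))⁻¹)
      = S / (perm' θ) ^ 2 := by
    rw [hSdef, Finset.sum_div]
    refine Finset.sum_congr rfl fun σ₁ _ => ?_
    rw [Finset.sum_div]
    refine Finset.sum_congr rfl fun σ₂ _ => ?_
    rw [div_mul_div_comm, div_mul_eq_mul_div, pow_two]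
  rw [hA, hRHS]
  rw [Real.div_rpow (le_of_lt hSpos) (le_of_lt (pow_pos hP 2)) (-(1/(2:ℝ)))]
  have hP2 : ((perm' θ) ^ 2) ^ (1/(2:ℝ)) = perm' θ := by
    rw [← Real.rpow_natCast (perm' θ) 2, ← Real.rpow_mul (le_of_lt hP)]
    norm_num
  rw [Real.rpow_neg (le_of_lt hSpos), Real.rpow_neg (le_of_lt (pow_pos hP 2)), hP2]
  rw [inv_div_inv]
end MainSec
/-- For `n ≥ 1` and a nonnegative `n×n` matrix `θ` having a permutation of
positive weight, with `p_θ(σ) = (∏_i θ(i,σ(i)))/perm(θ)`: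
`perm(θ)/perm_{B,2}(θ) = (Σ_{σ_1,σ_2} p_θ(σ_1)·p_θ(σ_2)·2^{−c(σ_1,σ_2)})^{−1/2}`,
where `c(σ_1,σ_2)` is the number of cycles of length at least `2` of `σ_1∘σ_2⁻¹`
(the number of entries of its cycle type), and `perm_{B,2}(θ) = ⟨perm(θ↑P_2)⟩^{1/2}`. -/
theorem statement_16 (n : ℕ) (hn : 1 ≤ n)
    (θ : Matrix (Fin n) (Fin n) ℝ) (hθ : ∀ i j, 0 ≤ θ i j)
    (hex : ∃ σ : Equiv.Perm (Fin n), 0 < ∏ i, θ i (σ i)) :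
    perm' θ / (avgLiftPerm n 2 θ) ^ (1 / (2 : ℝ)) =
      (∑ σ₁ : Equiv.Perm (Fin n), ∑ σ₂ : Equiv.Perm (Fin n),
          ((∏ i, θ i (σ₁ i)) / perm' θ) * ((∏ i, θ i (σ₂ i)) / perm' θ) *
            ((2 : ℝ) ^ (Multiset.card (σ₁ * σ₂⁻¹).cycleType))⁻¹) ^ (-(1 / (2 : ℝ))) := by
  exact statement16_aux n hn θ hθ hex
end Key2Sec
end
end

section
/- Let ι be a finite index set and for each i ∈ ι let X_i be a nonempty finite type. Let C be a complex matrix indexed by the product type Π_{i∈ι} X_i that is positive semidefinite (i.e., Hermitian with x^H C x ≥ 0 for all complex vectors x), and for each i ∈ ι let A_i be a positive semidefinite complex matrix indexed by X_i. Then the complex number Σ_{x, x' ∈ Π_i X_i} C(x, x') · ∏_{i∈ι} A_i(x(i), x'(i)) is real and nonnegative (its imaginary part is zero and its real part is ≥ 0). -/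
open scoped BigOperators

noncomputable section

open scoped ComplexOrder

/-- Let `ι` be a finite index set, `X i` nonempty finite types, `C` a
positive semidefinite complex matrix indexed by `Π i, X i` (i.e. Hermitian with
`x^H C x ≥ 0` for all complex vectors `x`, which is `Matrix.PosSemidef`), and `A i` positive
semidefinite complex matrices indexed by `X i`. Then
`Σ_{x,x'} C(x,x') · ∏_i A_i(x(i), x'(i))` is a nonnegative real number: its imaginary part
is zero and its real part is nonnegative. -/
theorem statement_19 (ι : Type*) [Fintype ι] [DecidableEq ι]
    (X : ι → Type*) [∀ i, Fintype (X i)] [∀ i, Nonempty (X i)]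
    (C : Matrix (∀ i, X i) (∀ i, X i) ℂ) (hC : C.PosSemidef)
    (A : ∀ i, Matrix (X i) (X i) ℂ) (hA : ∀ i, (A i).PosSemidef) :
    (∑ x : ∀ i, X i, ∑ x' : ∀ i, X i, C x x' * ∏ i, A i (x i) (x' i)).im = 0 ∧
      0 ≤ (∑ x : ∀ i, X i, ∑ x' : ∀ i, X i, C x x' * ∏ i, A i (x i) (x' i)).re := by
  obtain ⟨D, hD⟩ : ∃ D : Matrix (∀ i, X i) (∀ i, X i) ℂ, C = D.conjTranspose * D := by
    classical
    open scoped MatrixOrder in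
    exact CStarAlgebra.nonneg_iff_eq_star_mul_self.mp hC.nonneg
  choose E hE using fun i => (by
    classical
    open scoped MatrixOrder in
    exact CStarAlgebra.nonneg_iff_eq_star_mul_self.mp (hA i).nonneg :
      ∃ B : Matrix (X i) (X i) ℂ, A i = B.conjTranspose * B)
  set g : (∀ i, X i) → (∀ i, X i) → (∀ i, X i) → ℂ :=
    fun k κ x => D k x * ∏ i, E i (κ i) (x i) with hg
  have key : (∑ x : ∀ i, X i, ∑ x' : ∀ i, X i, C x x' * ∏ i, A i (x i) (x' i))
      = ∑ k : ∀ i, X i, ∑ κ : ∀ i, X i,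
          (starRingEnd ℂ) (∑ x : ∀ i, X i, g k κ x) * (∑ x' : ∀ i, X i, g k κ x') := by
    have hterm : ∀ x x' : (∀ i, X i), C x x' * ∏ i, A i (x i) (x' i)
        = ∑ k : ∀ i, X i, ∑ κ : ∀ i, X i, (starRingEnd ℂ) (g k κ x) * g k κ x' := by
      intro x x'
      have hCxx : C x x' = ∑ k : ∀ i, X i, (starRingEnd ℂ) (D k x) * D k x' := by
        rw [hD]; simp [Matrix.mul_apply, Matrix.conjTranspose_apply]
      have hAx : ∀ i, A i (x i) (x' i)
          = ∑ t : X i, (starRingEnd ℂ) (E i t (x i)) * E i t (x' i) := by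
        intro i
        rw [hE i]; simp [Matrix.mul_apply, Matrix.conjTranspose_apply]
      calc C x x' * ∏ i, A i (x i) (x' i)
          = (∑ k : ∀ i, X i, (starRingEnd ℂ) (D k x) * D k x')
            * ∑ κ : ∀ i, X i, ∏ i, (starRingEnd ℂ) (E i (κ i) (x i)) * E i (κ i) (x' i) := by
            rw [hCxx]
            congr 1
            rw [Finset.prod_congr rfl fun i _ => hAx i, Fintype.prod_sum]
        _ = ∑ k : ∀ i, X i, ∑ κ : ∀ i, X i, ((starRingEnd ℂ) (D k x) * D k x')
            * ∏ i, (starRingEnd ℂ) (E i (κ i) (x i)) * E i (κ i) (x' i) := by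
            rw [Finset.sum_mul_sum]
        _ = ∑ k : ∀ i, X i, ∑ κ : ∀ i, X i, (starRingEnd ℂ) (g k κ x) * g k κ x' := by
            refine Finset.sum_congr rfl fun k _ => Finset.sum_congr rfl fun κ _ => ?_
            simp only [hg, map_mul, map_prod, Finset.prod_mul_distrib]
            ring
    calc (∑ x : ∀ i, X i, ∑ x' : ∀ i, X i, C x x' * ∏ i, A i (x i) (x' i))
        = ∑ x : ∀ i, X i, ∑ x' : ∀ i, X i, ∑ k : ∀ i, X i, ∑ κ : ∀ i, X i,
            (starRingEnd ℂ) (g k κ x) * g k κ x' := by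
          exact Finset.sum_congr rfl fun x _ => Finset.sum_congr rfl fun x' _ => hterm x x'
      _ = ∑ k : ∀ i, X i, ∑ κ : ∀ i, X i, ∑ x : ∀ i, X i, ∑ x' : ∀ i, X i,
            (starRingEnd ℂ) (g k κ x) * g k κ x' := by
          refine (Finset.sum_congr rfl fun x _ => Finset.sum_comm).trans ?_
          rw [Finset.sum_comm]
          refine Finset.sum_congr rfl fun k _ => ?_
          exact (Finset.sum_congr rfl fun x _ => Finset.sum_comm).trans Finset.sum_comm
      _ = ∑ k : ∀ i, X i, ∑ κ : ∀ i, X i,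
            (starRingEnd ℂ) (∑ x : ∀ i, X i, g k κ x) * (∑ x' : ∀ i, X i, g k κ x') := by
          refine Finset.sum_congr rfl fun k _ => Finset.sum_congr rfl fun κ _ => ?_
          rw [map_sum, Finset.sum_mul_sum]
  have hnn : (0 : ℂ) ≤ ∑ x : ∀ i, X i, ∑ x' : ∀ i, X i, C x x' * ∏ i, A i (x i) (x' i) := by
    rw [key]
    refine Finset.sum_nonneg fun k _ => Finset.sum_nonneg fun κ _ => ?_
    rw [mul_comm, Complex.mul_conj]
    exact_mod_cast Complex.normSq_nonneg _
  rw [Complex.le_def] at hnn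
  exact ⟨hnn.2.symm, hnn.1⟩
end
end
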